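/- Let q ∈ [2,∞) and let x : [0,1] → ℝ be continuously differentiable with x(0) = x(1) = 0. Then ( sup_{r ∈ [0,1]} |x(r)| )^q ≤ q · ( ∫₀¹ x'(r)² |x(r)|^{q−2} dr )^{1/2} · ( ∫₀¹ |x(r)|^q dr )^{1/2}. -/

import Mathlib

open Set MeasureTheory

/-- Let `q ∈ [2,∞)` and let `x : [0,1] → ℝ` be continuously
differentiable with `x 0 = x 1 = 0`.  Then
`(sup_{r ∈ [0,1]} |x r|)^q ≤ q (∫₀¹ x'(r)² |x r|^{q-2} dr)^{1/2} (∫₀¹ |x r|^q dr)^{1/2}`. -/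
theorem sup_pow_le_of_boundary_zero (q : ℝ) (hq : 2 ≤ q)
    (x x' : ℝ → ℝ)
    (hderiv : ∀ r ∈ Icc (0:ℝ) 1, HasDerivWithinAt x (x' r) (Icc (0:ℝ) 1) r)
    (hcont : ContinuousOn x' (Icc (0:ℝ) 1))
    (hx0 : x 0 = 0) (hx1 : x 1 = 0) :
    (⨆ r : Icc (0:ℝ) 1, |x r|) ^ q ≤
      q * Real.sqrt (∫ r in Ioo (0:ℝ) 1, (x' r) ^ 2 * |x r| ^ (q - 2)) *
        Real.sqrt (∫ r in Ioo (0:ℝ) 1, |x r| ^ q) := by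
  have hq0 : (0:ℝ) < q := lt_of_lt_of_le two_pos hq
  have hqne : q ≠ 0 := ne_of_gt hq0
  have hc0 : (0:ℝ) ≤ (q - 2) / 2 := by linarith
  -- continuity of x on Icc
  have hxc : ContinuousOn x (Icc (0:ℝ) 1) := fun r hr => (hderiv r hr).continuousWithinAt
  -- basic rpow identities
  have habs : ∀ y : ℝ, ((y:ℝ)^2) ^ (q/2) = |y| ^ q := by
    intro y
    rw [← sq_abs, ← Real.rpow_natCast |y| 2, ← Real.rpow_mul (abs_nonneg y)]
    norm_num
    ring_nf
  have habs2 : ∀ y : ℝ, ((y:ℝ)^2) ^ ((q-2)/2) = |y| ^ (q - 2) := by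
    intro y
    rw [← sq_abs, ← Real.rpow_natCast |y| 2, ← Real.rpow_mul (abs_nonneg y)]
    norm_num
    ring_nf
  -- derivative of the outer function
  have hgd : ∀ y : ℝ, HasDerivAt (fun y : ℝ => (y^2) ^ (q/2)) (q * y * |y| ^ (q-2)) y := by
    intro y
    have h1 : HasDerivAt (fun y : ℝ => (y:ℝ)^2) (2 * y) y := by
      simpa using hasDerivAt_pow 2 y
    have h2 := (Real.hasDerivAt_rpow_const (x := y^2) (p := q/2)
      (Or.inr (by linarith))).comp y h1
    refine h2.congr_deriv ?_
    have : q/2 - 1 = (q-2)/2 := by ring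
    rw [this, habs2 y]
    ring
  -- F r = |x r| ^ q and its derivative within Icc
  set F : ℝ → ℝ := fun r => |x r| ^ q with hF
  set D : ℝ → ℝ := fun r => q * x r * |x r| ^ (q-2) * x' r with hD
  have hFeq : (fun r => (x r ^ 2) ^ (q/2)) = F := funext fun r => habs (x r)
  have hFd : ∀ r ∈ Icc (0:ℝ) 1, HasDerivWithinAt F (D r) (Icc (0:ℝ) 1) r := by
    intro r hr
    have := (hgd (x r)).comp_hasDerivWithinAt r (hderiv r hr)
    rw [show ((fun y : ℝ => (y^2) ^ (q/2)) ∘ x) = F from hFeq] at this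
    simpa [hD, mul_comm, mul_assoc, mul_left_comm] using this
  -- continuity facts
  have hpow : ∀ p : ℝ, 0 ≤ p → ContinuousOn (fun r => |x r| ^ p) (Icc (0:ℝ) 1) :=
    fun p hp => hxc.abs.rpow_const (fun r _ => Or.inr hp)
  have hFc : ContinuousOn F (Icc (0:ℝ) 1) := hpow q hq0.le
  have hDc : ContinuousOn D (Icc (0:ℝ) 1) :=
    ((continuousOn_const.mul hxc).mul (hpow _ (by linarith))).mul hcont
  -- FTC on [0, t]
  have key : ∀ t ∈ Icc (0:ℝ) 1, F t = ∫ r in (0:ℝ)..t, D r := by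
    intro t ht
    have hsub : Icc (0:ℝ) t ⊆ Icc 0 1 := Icc_subset_Icc le_rfl ht.2
    have hftc := intervalIntegral.integral_eq_sub_of_hasDeriv_right_of_le ht.1
      (hFc.mono hsub)
      (fun r hr => ((hFd r ⟨hr.1.le, hr.2.le.trans ht.2⟩).hasDerivAt
        (Icc_mem_nhds hr.1 (lt_of_lt_of_le hr.2 ht.2))).hasDerivWithinAt)
      ((hDc.mono hsub).intervalIntegrable_of_Icc ht.1)
    have hF0 : F 0 = 0 := by simp [hF, hx0, Real.zero_rpow hqne]
    rw [hftc, hF0, sub_zero]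
  -- the auxiliary functions for Cauchy–Schwarz
  set f : ℝ → ℝ := fun r => |x' r| * |x r| ^ ((q-2)/2) with hf
  set g : ℝ → ℝ := fun r => |x r| ^ (q/2) with hg
  have hfc : ContinuousOn f (Icc (0:ℝ) 1) := hcont.abs.mul (hpow _ hc0)
  have hgc : ContinuousOn g (Icc (0:ℝ) 1) := hpow _ (by positivity)
  have hsplit : ∀ r, |x r| * |x r| ^ (q-2) = (|x r| ^ ((q-2)/2)) * (|x r| ^ (q/2)) := by
    intro r
    rcases eq_or_ne (x r) 0 with h | h
    · simp [h, Real.zero_rpow (show q/2 ≠ 0 by positivity)]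
    · have ha : (0:ℝ) < |x r| := abs_pos.2 h
      calc |x r| * |x r| ^ (q-2) = |x r| ^ ((1:ℝ) + (q-2)) := by
            rw [Real.rpow_add ha, Real.rpow_one]
        _ = |x r| ^ ((q-2)/2 + q/2) := by norm_num; ring_nf
        _ = (|x r| ^ ((q-2)/2)) * (|x r| ^ (q/2)) := Real.rpow_add ha _ _
  have hDabs : ∀ r, |D r| = q * (f r * g r) := by
    intro r
    have h1 : |D r| = q * |x r| * |x r| ^ (q-2) * |x' r| := by
      rw [hD]
      rw [abs_mul, abs_mul, abs_mul, abs_of_nonneg hq0.le,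
        abs_of_nonneg (Real.rpow_nonneg (abs_nonneg _) _)]
    rw [h1, hf, hg]
    linear_combination (q * |x' r|) * hsplit r
  -- the max of |x| on [0,1]
  obtain ⟨t₀, ht₀m, ht₀⟩ := isCompact_Icc.exists_isMaxOn (nonempty_Icc.2 zero_le_one) hxc.abs
  haveI : Nonempty (Icc (0:ℝ) 1) := ⟨⟨0, by norm_num⟩⟩
  have hM : (⨆ r : Icc (0:ℝ) 1, |x r|) = |x t₀| := by
    refine le_antisymm (ciSup_le fun r => ht₀ r.2) ?_
    exact le_ciSup ⟨|x t₀|, by rintro y ⟨r, rfl⟩; exact ht₀ r.2⟩ (⟨t₀, ht₀m⟩ : Icc (0:ℝ) 1)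
  -- Cauchy–Schwarz (Hölder with p = q = 2)
  set μ : Measure ℝ := volume.restrict (Ioo (0:ℝ) 1) with hμ
  haveI : IsFiniteMeasure μ := ⟨by simp [hμ, Real.volume_Ioo]⟩
  have hmemℒ : ∀ {u : ℝ → ℝ}, ContinuousOn u (Icc (0:ℝ) 1) → MemLp u 2 μ := by
    intro u hu
    obtain ⟨C, hC⟩ := isCompact_Icc.exists_bound_of_continuousOn hu
    refine MemLp.of_bound ((hu.mono Ioo_subset_Icc_self).aestronglyMeasurable
      measurableSet_Ioo) C ?_
    exact (ae_restrict_iff' measurableSet_Ioo).2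
      (Filter.Eventually.of_forall fun r hr => hC r (Ioo_subset_Icc_self hr))
  have hCS : ∫ r in Ioo (0:ℝ) 1, f r * g r ≤
      (∫ r in Ioo (0:ℝ) 1, f r ^ (2:ℝ)) ^ ((1:ℝ)/2) *
        (∫ r in Ioo (0:ℝ) 1, g r ^ (2:ℝ)) ^ ((1:ℝ)/2) := by
    have hpq : Real.HolderConjugate 2 2 := Real.HolderConjugate.two_two
    have := integral_mul_le_Lp_mul_Lq_of_nonneg hpq
      (μ := μ) (f := f) (g := g)
      (Filter.Eventually.of_forall fun r => by positivity)
      (Filter.Eventually.of_forall fun r => Real.rpow_nonneg (abs_nonneg _) _)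
      (by simpa using hmemℒ hfc) (by simpa using hmemℒ hgc)
    simpa using this
  -- rewrite the squares
  have hfsq : ∀ r, f r ^ (2:ℝ) = (x' r) ^ 2 * |x r| ^ (q - 2) := by
    intro r
    rw [show (2:ℝ) = ((2:ℕ):ℝ) by norm_num, Real.rpow_natCast, hf]
    rw [mul_pow, sq_abs, ← Real.rpow_natCast (|x r| ^ ((q-2)/2)) 2,
      ← Real.rpow_mul (abs_nonneg _)]
    norm_num
  have hgsq : ∀ r, g r ^ (2:ℝ) = |x r| ^ q := by
    intro r
    rw [show (2:ℝ) = ((2:ℕ):ℝ) by norm_num, Real.rpow_natCast, hg,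
      ← Real.rpow_natCast (|x r| ^ (q/2)) 2, ← Real.rpow_mul (abs_nonneg _)]
    norm_num
  -- put it all together
  rw [hM]
  have hIoo : ∀ u : ℝ → ℝ, ∫ r in (0:ℝ)..1, u r = ∫ r in Ioo (0:ℝ) 1, u r := by
    intro u
    rw [intervalIntegral.integral_of_le zero_le_one, integral_Ioc_eq_integral_Ioo]
  have hDint : IntervalIntegrable D volume 0 1 := hDc.intervalIntegrable_of_Icc zero_le_one
  have habsint : IntervalIntegrable (fun r => |D r|) volume 0 1 :=
    hDc.abs.intervalIntegrable_of_Icc zero_le_one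
  calc |x t₀| ^ q = F t₀ := rfl
    _ = ∫ r in (0:ℝ)..t₀, D r := key t₀ ht₀m
    _ ≤ ∫ r in (0:ℝ)..t₀, |D r| := by
        refine intervalIntegral.integral_mono_on ht₀m.1
          (hDint.mono_set ?_) (habsint.mono_set ?_) (fun r _ => le_abs_self _)
        · rw [uIcc_of_le ht₀m.1, uIcc_of_le zero_le_one]
          exact Icc_subset_Icc le_rfl ht₀m.2
        · rw [uIcc_of_le ht₀m.1, uIcc_of_le zero_le_one]
          exact Icc_subset_Icc le_rfl ht₀m.2
    _ ≤ ∫ r in (0:ℝ)..1, |D r| := by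
        refine intervalIntegral.integral_mono_interval le_rfl ht₀m.1 ht₀m.2 ?_ habsint
        exact (ae_restrict_iff' measurableSet_Ioc).2
          (Filter.Eventually.of_forall fun r _ => abs_nonneg _)
    _ = q * ∫ r in (0:ℝ)..1, f r * g r := by
        simp only [hDabs]
        rw [intervalIntegral.integral_const_mul]
    _ = q * ∫ r in Ioo (0:ℝ) 1, f r * g r := by rw [hIoo]
    _ ≤ q * ((∫ r in Ioo (0:ℝ) 1, f r ^ (2:ℝ)) ^ ((1:ℝ)/2) *
          (∫ r in Ioo (0:ℝ) 1, g r ^ (2:ℝ)) ^ ((1:ℝ)/2)) :=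
        mul_le_mul_of_nonneg_left hCS hq0.le
    _ = q * Real.sqrt (∫ r in Ioo (0:ℝ) 1, (x' r) ^ 2 * |x r| ^ (q - 2)) *
          Real.sqrt (∫ r in Ioo (0:ℝ) 1, |x r| ^ q) := by
        simp only [hfsq, hgsq]
        rw [Real.sqrt_eq_rpow, Real.sqrt_eq_rpow]
        ring
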